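/- Let n ≥ 1 and let a = a₁a₂⋯aₙ be a signed permutation on [n]. Let p be the (2n+1)-cycle (0, −1, −2, …, −n, n, n−1, …, 1) on [n]± and let s̃ = s̃(a) be the (2n+1)-cycle (0, a₁, …, aₙ, −aₙ, …, −a₁) on [n]±. On the set [n]± ∪ {−(n+1)}, let θ₂ be the fixed-point-free involution (0, −1)(1, −2)⋯(n, −n−1), and let θ₁ be the fixed-point-free involution (b₀, b₁)(b₂, b₃)⋯(b_{2n}, b_{2n+1}), where the sequence b = b₀b₁⋯b_{2n+1} is given by b₀ = 0, b_{2k−1} = −a_k and b_{2k} = a_k for 1 ≤ k ≤ n, and b_{2n+1} = −(n+1). Then C(p ∘ s̃) = C(θ₁ ∘ θ₂) − 1. -/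

import Mathlib

/-- Number of cycles of a permutation of a finite set, fixed points counting as 1-cycles. -/
def cycleCount {α : Type*} [Fintype α] [DecidableEq α] (π : Equiv.Perm α) : ℕ :=
  π.cycleType.card + (Finset.univ.filter fun x => π x = x).card

/-- The set `[n]± = {-n, …, -1, 0, 1, …, n}` of integers. -/
abbrev Ipm (n : ℕ) : Type := {j : ℤ // j ∈ Finset.Icc (-(n : ℤ)) (n : ℤ)}

/-- The set `[n]± ∪ {-(n+1)} = {-(n+1), -n, …, -1, 0, 1, …, n}` of integers. -/
abbrev Jpm (n : ℕ) : Type := {j : ℤ // j ∈ Finset.Icc (-(n : ℤ) - 1) (n : ℤ)}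

/-- The sequence `s = 0, a₁, …, aₙ, -aₙ, …, -a₁` (indices `0, …, 2n`). -/
def seq (n : ℕ) (a : ℕ → ℤ) (k : ℕ) : ℤ :=
  if k = 0 then 0 else if k ≤ n then a k else -a (2 * n + 1 - k)

/-- The sequence `b = b₀, …, b_{2n+1}` with `b₀ = 0`, `b_{2k-1} = -a_k`, `b_{2k} = a_k`
for `1 ≤ k ≤ n`, and `b_{2n+1} = -(n+1)`. -/
def bseq (n : ℕ) (a : ℕ → ℤ) (k : ℕ) : ℤ :=
  if k = 0 then 0
  else if k = 2 * n + 1 then -((n : ℤ) + 1)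
  else if k % 2 = 1 then -a ((k + 1) / 2)
  else a (k / 2)

/-- `a₁, …, aₙ` is a signed permutation on `[n]`:
`|a₁|, …, |aₙ|` is a permutation of `1, …, n`. -/
def IsSignedPerm (n : ℕ) (a : ℕ → ℤ) : Prop :=
  (Finset.Icc 1 n).image (fun k => |a k|) = Finset.Icc (1 : ℤ) (n : ℤ)


namespace StmtAux
open Equiv Equiv.Perm Finset

variable {α : Type*} [Fintype α] [DecidableEq α]

set_option linter.unusedSectionVars false in
lemma sameCycle_iff_pow (f : Equiv.Perm α) (x y : α) :
    f.SameCycle x y ↔ ∃ i : ℕ, (f ^ i) x = y := by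
  constructor
  · intro h
    obtain ⟨i, _, h⟩ := h.exists_pow_eq'
    exact ⟨i, h⟩
  · rintro ⟨i, rfl⟩
    exact ⟨(i : ℤ), by simp⟩

def orb (f : Equiv.Perm α) (x : α) : Finset α := univ.filter (f.SameCycle x)

def Orbs (f : Equiv.Perm α) : Finset (Finset α) := univ.image (orb f)

lemma mem_orb {f : Equiv.Perm α} {x y : α} : y ∈ orb f x ↔ f.SameCycle x y := by
  simp [orb]

lemma self_mem_orb (f : Equiv.Perm α) (x : α) : x ∈ orb f x :=
  mem_orb.2 (SameCycle.refl f x)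

lemma orb_eq_of_sameCycle {f : Equiv.Perm α} {x y : α} (h : f.SameCycle x y) :
    orb f x = orb f y := by
  ext w; simp only [mem_orb]
  exact ⟨fun h' => h.symm.trans h', fun h' => h.trans h'⟩

lemma sameCycle_of_orb_eq {f : Equiv.Perm α} {x y : α} (h : orb f x = orb f y) :
    f.SameCycle x y := by
  have := self_mem_orb f y
  rw [← h, mem_orb] at this
  exact this

lemma orb_mem_Orbs (f : Equiv.Perm α) (x : α) : orb f x ∈ Orbs f :=
  mem_image_of_mem _ (mem_univ x)

lemma mem_Orbs {f : Equiv.Perm α} {O : Finset α} :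
    O ∈ Orbs f ↔ ∃ x, orb f x = O := by
  simp [Orbs, eq_comm]

end StmtAux

set_option linter.unusedSectionVars false

namespace StmtAux
open Equiv Equiv.Perm Finset

variable {α : Type*} [Fintype α] [DecidableEq α]

lemma orb_of_fixed {f : Equiv.Perm α} {x : α} (hx : f x = x) : orb f x = {x} := by
  ext y
  simp only [mem_orb, mem_singleton]
  constructor
  · intro h
    exact (h.eq_of_left hx).symm
  · rintro rfl
    exact SameCycle.refl f _

lemma orb_of_moved {f : Equiv.Perm α} {x : α} (hx : f x ≠ x) :
    orb f x = (f.cycleOf x).support := by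
  ext y
  rw [mem_orb, mem_support_cycleOf_iff' hx]

lemma cycleCount_eq_card_Orbs (f : Equiv.Perm α) : cycleCount f = (Orbs f).card := by
  classical
  have hsplit : (univ : Finset α) = univ.filter (fun x => ¬ f x = x) ∪ univ.filter (fun x => f x = x) := by
    ext x
    simp only [mem_union, mem_filter, mem_univ, true_and]
    tauto
  have hOrbs : Orbs f = (univ.filter (fun x => ¬ f x = x)).image (orb f) ∪
      (univ.filter (fun x => f x = x)).image (orb f) := by
    rw [Orbs]
    conv_lhs => rw [hsplit]
    rw [image_union]
  have hdisj : Disjoint ((univ.filter (fun x => ¬ f x = x)).image (orb f))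
      ((univ.filter (fun x => f x = x)).image (orb f)) := by
    rw [disjoint_left]
    rintro O hO1 hO2
    simp only [mem_image, mem_filter, mem_univ, true_and] at hO1 hO2
    obtain ⟨x, hx, rfl⟩ := hO1
    obtain ⟨y, hy, hxy⟩ := hO2
    have : x ∈ orb f y := by rw [hxy]; exact self_mem_orb f x
    rw [mem_orb] at this
    exact hx (this.eq_of_left hy ▸ hy)
  have hfix : ((univ.filter (fun x => f x = x)).image (orb f)).card
      = (univ.filter (fun x => f x = x)).card := by
    apply card_image_of_injOn
    intro x hx y hy hxy
    simp only [mem_coe, mem_filter] at hx hy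
    exact (sameCycle_of_orb_eq hxy).eq_of_left hx.2
  have hmoved : ((univ.filter (fun x => ¬ f x = x)).image (orb f)).card
      = f.cycleFactorsFinset.card := by
    symm
    apply card_bij (fun c _ => c.support)
    · intro c hc
      have hcyc := (mem_cycleFactorsFinset_iff.1 hc).1
      obtain ⟨x, hx, -⟩ := hcyc
      have hxs : x ∈ c.support := mem_support.2 hx
      have hfx : f x ≠ x := by
        rw [← (mem_cycleFactorsFinset_iff.1 hc).2 x hxs]
        exact hx
      have : c = f.cycleOf x := cycle_is_cycleOf hxs hc
      refine mem_image.2 ⟨x, mem_filter.2 ⟨mem_univ x, hfx⟩, ?_⟩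
      rw [orb_of_moved hfx, this]
    · intro c hc c' hc' h
      have hcyc := (mem_cycleFactorsFinset_iff.1 hc).1
      obtain ⟨x, hx, -⟩ := hcyc
      have hxs : x ∈ c.support := mem_support.2 hx
      have hxs' : x ∈ c'.support := by rw [← h]; exact hxs
      rw [cycle_is_cycleOf hxs hc, cycle_is_cycleOf hxs' hc']
    · intro O hO
      simp only [mem_image, mem_filter, mem_univ, true_and] at hO
      obtain ⟨x, hx, rfl⟩ := hO
      refine ⟨f.cycleOf x, cycleOf_mem_cycleFactorsFinset_iff.2 (mem_support.2 hx), ?_⟩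
      rw [orb_of_moved hx]
  have hct : f.cycleType.card = f.cycleFactorsFinset.card := by
    rw [cycleType_def, Multiset.card_map]
    rfl
  rw [cycleCount, hOrbs, card_union_of_disjoint hdisj, hfix, hmoved, hct]

end StmtAux

namespace StmtAux
open Equiv Equiv.Perm Finset

variable {α : Type*} [Fintype α] [DecidableEq α]

lemma orbit_induction {f : Equiv.Perm α} {x : α} {P : α → Prop} (hx : P x)
    (H : ∀ y, f.SameCycle x y → P y → P (f y)) :
    ∀ y, f.SameCycle x y → P y := by
  intro y hy
  rw [sameCycle_iff_pow] at hy
  obtain ⟨i, rfl⟩ := hy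
  induction i with
  | zero => simpa using hx
  | succ k ih =>
    have hstep : (f ^ (k + 1)) x = f ((f ^ k) x) := by
      rw [pow_succ', mul_apply]
    rw [hstep]
    exact H _ ⟨(k : ℤ), by simp⟩ ih

lemma sameCycle_step {f : Equiv.Perm α} {x y : α} (h : f.SameCycle x y) :
    f.SameCycle x (f y) :=
  h.trans ⟨1, by simp⟩

lemma Orbs_inv (f : Equiv.Perm α) : Orbs f⁻¹ = Orbs f := by
  have : orb f⁻¹ = orb f := by
    funext x
    ext y
    rw [mem_orb, mem_orb, sameCycle_inv]
  rw [Orbs, Orbs, this]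

lemma not_sameCycle_fpf (θ₁ θ₂ σ : Equiv.Perm α) (hσ : σ = θ₂ * θ₁)
    (h1 : ∀ x, θ₁ x ≠ x) (h2 : ∀ x, θ₂ x ≠ x)
    (i1 : θ₁ * θ₁ = 1) (i2 : θ₂ * θ₂ = 1) (x : α) :
    ¬ σ.SameCycle x (θ₂ x) := by
  have hinv2 : θ₂⁻¹ = θ₂ := inv_eq_of_mul_eq_one_left i2
  have hinv1 : θ₁⁻¹ = θ₁ := inv_eq_of_mul_eq_one_left i1
  have hp2 : ∀ y, θ₂ (θ₂ y) = y := by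
    intro y
    have := congrArg (fun g : Equiv.Perm α => g y) i2
    simpa [Equiv.Perm.mul_apply] using this
  have hp21 : ∀ y, θ₂ (σ y) = θ₁ y := by
    intro y
    rw [hσ]
    simp only [Equiv.Perm.mul_apply]
    exact hp2 _
  have hconj : θ₂ * σ * θ₂⁻¹ = σ⁻¹ := by
    rw [hσ, hinv2, mul_inv_rev, hinv1, hinv2, ← mul_assoc, i2, one_mul]
  have key : ∀ t : ℤ, ∀ y, θ₂ ((σ ^ t) y) = (σ ^ (-t)) (θ₂ y) := by
    intro t y
    have h1' : θ₂ * σ ^ t * θ₂⁻¹ = (θ₂ * σ * θ₂⁻¹) ^ t := (conj_zpow ..).symm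
    rw [hconj, inv_zpow, ← zpow_neg] at h1'
    have h2' : θ₂ * σ ^ t = σ ^ (-t) * θ₂ := by
      calc θ₂ * σ ^ t = θ₂ * σ ^ t * θ₂⁻¹ * θ₂ := by group
        _ = σ ^ (-t) * θ₂ := by rw [h1']
    have := congrArg (fun g : Equiv.Perm α => g y) h2'
    simpa [Equiv.Perm.mul_apply] using this
  have comp : ∀ (a b : ℤ) (y : α), (σ ^ a) ((σ ^ b) y) = (σ ^ (a + b)) y := by
    intro a b y
    rw [← Equiv.Perm.mul_apply, ← zpow_add]
  rintro ⟨m, hm⟩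
  rcases Int.even_or_odd m with ⟨t, ht⟩ | ⟨t, ht⟩
  · apply h2 ((σ ^ t) x)
    calc θ₂ ((σ ^ t) x) = (σ ^ (-t)) (θ₂ x) := key t x
      _ = (σ ^ (-t)) ((σ ^ m) x) := by rw [hm]
      _ = (σ ^ (-t + m)) x := comp _ _ _
      _ = (σ ^ t) x := by rw [ht]; ring_nf
  · apply h1 ((σ ^ t) x)
    calc θ₁ ((σ ^ t) x) = θ₂ (σ ((σ ^ t) x)) := (hp21 _).symm
      _ = θ₂ ((σ ^ (1 : ℤ)) ((σ ^ t) x)) := by rw [zpow_one]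
      _ = θ₂ ((σ ^ (1 + t)) x) := by rw [comp]
      _ = (σ ^ (-(1 + t))) (θ₂ x) := key _ x
      _ = (σ ^ (-(1 + t))) ((σ ^ m) x) := by rw [hm]
      _ = (σ ^ (-(1 + t) + m)) x := comp _ _ _
      _ = (σ ^ t) x := by rw [ht]; ring_nf

end StmtAux

namespace StmtAux
open Equiv Equiv.Perm Finset

variable {α : Type*} [Fintype α] [DecidableEq α]

lemma merge_card (σ τ : Equiv.Perm α) (z nn u w : α)
    (hzn : z ≠ nn)
    (hτz : τ z = z)
    (hσu : σ u = z) (hσw : σ w = nn)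
    (hns : ¬ σ.SameCycle z nn)
    (hτu : τ u = nn) (hτw : τ w = σ z)
    (hother : ∀ x, x ≠ u → x ≠ w → x ≠ z → τ x = σ x) :
    (Orbs τ).card = (Orbs σ).card := by
  classical
  have huz : u ≠ z := by
    intro h
    rw [h, hτz] at hτu
    exact hzn hτu
  have hwz : w ≠ z := by
    intro h
    rw [h] at hσw
    exact hns ⟨1, by simpa using hσw⟩
  have hSzu : σ.SameCycle z u := ⟨-1, by simp [← hσu]⟩
  have hSnw : σ.SameCycle nn w := ⟨-1, by simp [← hσw]⟩
  -- z is fixed by τ, so its τ-orbit is {z}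
  have tz_orbit : ∀ y, τ.SameCycle z y → y = z := fun y h => (h.eq_of_left hτz).symm
  have tz_orbit' : ∀ y, τ.SameCycle y z → y = z := fun y h => tz_orbit y h.symm
  -- the union of the σ-orbits of z and nn
  set U : α → Prop := fun y => σ.SameCycle z y ∨ σ.SameCycle nn y with hU
  have hUz : U z := Or.inl (SameCycle.refl _ _)
  have hUnn : U nn := Or.inr (SameCycle.refl _ _)
  have hUu : U u := Or.inl hSzu
  have hUw : U w := Or.inr hSnw
  have hUτ : ∀ y, U y → U (τ y) := by
    intro y hy
    by_cases hyu : y = u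
    · rw [hyu, hτu]; exact hUnn
    by_cases hyw : y = w
    · rw [hyw, hτw]; exact Or.inl ⟨1, by simp⟩
    by_cases hyz : y = z
    · rw [hyz, hτz]; exact hUz
    · rw [hother y hyu hyw hyz]
      rcases hy with h | h
      · exact Or.inl (sameCycle_step h)
      · exact Or.inr (sameCycle_step h)
  -- C1 : σ-orbit of nn is contained in the τ-orbit of nn
  have C1 : ∀ y, σ.SameCycle nn y → τ.SameCycle nn y := by
    apply orbit_induction (SameCycle.refl _ _)
    intro y hy ih
    by_cases hyu : y = u
    · exfalso
      rw [hyu] at hy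
      exact hns (hSzu.trans hy.symm)
    by_cases hyw : y = w
    · simp only [hyw, hσw]; exact SameCycle.refl _ _
    by_cases hyz : y = z
    · exfalso
      rw [hyz] at hy
      exact hns hy.symm
    · rw [← hother y hyu hyw hyz]
      exact sameCycle_step ih
  -- C2 : σ-orbit of z minus z is contained in the τ-orbit of nn
  have hSτnσz : τ.SameCycle nn (σ z) := by
    rw [← hτw]
    exact sameCycle_step (C1 w hSnw)
  have C2 : ∀ y, σ.SameCycle z y → y = z ∨ τ.SameCycle nn y := by
    refine orbit_induction (P := fun y => y = z ∨ τ.SameCycle nn y) (Or.inl rfl) ?_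
    intro y hy ih
    by_cases hyz : y = z
    · rw [hyz]; exact Or.inr hSτnσz
    rcases ih with h | h
    · exact absurd h hyz
    by_cases hyu : y = u
    · rw [hyu, hσu]; exact Or.inl rfl
    by_cases hyw : y = w
    · rw [hyw, hσw]; exact Or.inr (SameCycle.refl _ _)
    · rw [← hother y hyu hyw hyz]
      exact Or.inr (sameCycle_step h)
  -- D : τ-orbit of nn is contained in U
  have D : ∀ y, τ.SameCycle nn y → U y :=
    orbit_induction hUnn (fun y _ hy => hUτ y hy)
  -- z not in the τ-orbit of nn
  have hznn' : ¬ τ.SameCycle nn z := fun h => hzn (tz_orbit' nn h).symm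
  -- E : outside U, σ-orbits and τ-orbits coincide
  have hUsymm : ∀ x₀ y, σ.SameCycle x₀ y → U y → U x₀ := by
    intro x₀ y h hy
    rcases hy with h' | h'
    · exact Or.inl (h'.trans h.symm)
    · exact Or.inr (h'.trans h.symm)
  have E : ∀ x₀, ¬ U x₀ → (orb σ x₀ = orb τ x₀) := by
    intro x₀ hx₀
    have fwd : ∀ y, σ.SameCycle x₀ y → τ.SameCycle x₀ y := by
      apply orbit_induction (SameCycle.refl _ _)
      intro y hy ih
      by_cases hyu : y = u
      · exact absurd (hUsymm x₀ y hy (hyu ▸ hUu)) hx₀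
      by_cases hyw : y = w
      · exact absurd (hUsymm x₀ y hy (hyw ▸ hUw)) hx₀
      by_cases hyz : y = z
      · exact absurd (hUsymm x₀ y hy (hyz ▸ hUz)) hx₀
      · rw [← hother y hyu hyw hyz]
        exact sameCycle_step ih
    have bwd : ∀ y, τ.SameCycle x₀ y → σ.SameCycle x₀ y := by
      apply orbit_induction (SameCycle.refl _ _)
      intro y _ ih
      by_cases hyu : y = u
      · exact absurd (hUsymm x₀ y ih (hyu ▸ hUu)) hx₀
      by_cases hyw : y = w
      · exact absurd (hUsymm x₀ y ih (hyw ▸ hUw)) hx₀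
      by_cases hyz : y = z
      · exact absurd (hUsymm x₀ y ih (hyz ▸ hUz)) hx₀
      · rw [hother y hyu hyw hyz]
        exact sameCycle_step ih
    ext y
    rw [mem_orb, mem_orb]
    exact ⟨fwd y, bwd y⟩
  -- the bijection between the orbit sets
  set F : Finset α → Finset α := fun O => if z ∈ O then {z} else if nn ∈ O then orb τ nn else O with hF
  set G : Finset α → Finset α := fun O => if z ∈ O then orb σ z else if nn ∈ O then orb σ nn else O with hG
  have hτorbz : orb τ z = {z} := orb_of_fixed hτz
  have hz_orbτnn : z ∉ orb τ nn := by rw [mem_orb]; exact hznn'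
  have hnotU : ∀ y₀, ¬ τ.SameCycle y₀ z → ¬ τ.SameCycle y₀ nn → ¬ U y₀ := by
    intro y₀ h1 h2 hy₀
    rcases hy₀ with h | h
    · rcases C2 y₀ h with rfl | h'
      · exact h1 (SameCycle.refl _ _)
      · exact h2 h'.symm
    · exact h2 (C1 y₀ h).symm
  apply card_bij' (fun O _ => G O) (fun O _ => F O)
  · -- G maps Orbs τ into Orbs σ
    intro O hO
    obtain ⟨y₀, rfl⟩ := mem_Orbs.1 hO
    by_cases h1 : z ∈ orb τ y₀
    · simp only [hG, if_pos h1]; exact orb_mem_Orbs σ z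
    by_cases h2 : nn ∈ orb τ y₀
    · simp only [hG, if_neg h1, if_pos h2]; exact orb_mem_Orbs σ nn
    · simp only [hG, if_neg h1, if_neg h2]
      rw [mem_orb] at h1 h2
      rw [← E y₀ (hnotU y₀ h1 h2)]
      exact orb_mem_Orbs σ y₀
  · -- F maps Orbs σ into Orbs τ
    intro O hO
    obtain ⟨x₀, rfl⟩ := mem_Orbs.1 hO
    by_cases h1 : z ∈ orb σ x₀
    · simp only [hF, if_pos h1]
      rw [← hτorbz]; exact orb_mem_Orbs τ z
    by_cases h2 : nn ∈ orb σ x₀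
    · simp only [hF, if_neg h1, if_pos h2]; exact orb_mem_Orbs τ nn
    · simp only [hF, if_neg h1, if_neg h2]
      rw [mem_orb] at h1 h2
      have hnU : ¬ U x₀ := by
        intro h
        rcases h with h | h
        · exact h1 h.symm
        · exact h2 h.symm
      rw [E x₀ hnU]
      exact orb_mem_Orbs τ x₀
  · -- F ∘ G = id on Orbs τ
    intro O hO
    obtain ⟨y₀, rfl⟩ := mem_Orbs.1 hO
    by_cases h1 : z ∈ orb τ y₀
    · have : orb τ y₀ = {z} := by
        rw [mem_orb] at h1
        rw [orb_eq_of_sameCycle h1, hτorbz]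
      simp only [hG, if_pos h1, hF]
      rw [if_pos (self_mem_orb σ z), this]
    by_cases h2 : nn ∈ orb τ y₀
    · simp only [hG, if_neg h1, if_pos h2, hF]
      have hzno : z ∉ orb σ nn := by
        rw [mem_orb]
        exact fun h => hns h.symm
      rw [if_neg hzno, if_pos (self_mem_orb σ nn)]
      rw [mem_orb] at h2
      exact (orb_eq_of_sameCycle h2).symm
    · simp only [hG, if_neg h1, if_neg h2, hF, if_neg h1, if_neg h2]
  · -- G ∘ F = id on Orbs σ
    intro O hO
    obtain ⟨x₀, rfl⟩ := mem_Orbs.1 hO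
    by_cases h1 : z ∈ orb σ x₀
    · have : orb σ x₀ = orb σ z := by
        rw [mem_orb] at h1
        exact orb_eq_of_sameCycle h1
      simp only [hF, if_pos h1, hG]
      rw [if_pos (mem_singleton_self z), this]
    by_cases h2 : nn ∈ orb σ x₀
    · have : orb σ x₀ = orb σ nn := by
        rw [mem_orb] at h2
        exact orb_eq_of_sameCycle h2
      simp only [hF, if_neg h1, if_pos h2, hG]
      rw [if_neg hz_orbτnn, if_pos (self_mem_orb τ nn), this]
    · simp only [hF, if_neg h1, if_neg h2, hG, if_neg h1, if_neg h2]

end StmtAux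

namespace StmtAux
open Equiv Equiv.Perm Finset

variable {α : Type*} [Fintype α] [DecidableEq α]
variable {β : Type*} [Fintype β] [DecidableEq β]

lemma ext_card (τ : Equiv.Perm α) (τ' : Equiv.Perm β)
    (ι : α → β) (hι : Function.Injective ι) (z : β)
    (hz : ∀ a, ι a ≠ z) (hcover : ∀ b, b = z ∨ ∃ a, ι a = b)
    (hτ' : ∀ a, τ' (ι a) = ι (τ a)) (hz' : τ' z = z) :
    (Orbs τ').card = (Orbs τ).card + 1 := by
  classical
  have key1 : ∀ a y, τ'.SameCycle (ι a) y ↔ ∃ b, τ.SameCycle a b ∧ ι b = y := by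
    intro a y
    constructor
    · refine orbit_induction (P := fun y => ∃ b, τ.SameCycle a b ∧ ι b = y)
        ⟨a, SameCycle.refl _ _, rfl⟩ ?_ y
      rintro y' _ ⟨b, hb, rfl⟩
      exact ⟨τ b, sameCycle_step hb, (hτ' b).symm⟩
    · rintro ⟨b, hb, rfl⟩
      refine orbit_induction (P := fun c => τ'.SameCycle (ι a) (ι c))
        (SameCycle.refl _ _) ?_ b hb
      intro c _ ih
      rw [← hτ' c]
      exact sameCycle_step ih
  have horb : ∀ a, orb τ' (ι a) = (orb τ a).image ι := by
    intro a
    ext y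
    rw [mem_orb, key1]
    simp only [mem_image, mem_orb]
  have hOrbs : Orbs τ' = insert {z} ((Orbs τ).image (fun O => O.image ι)) := by
    ext O
    rw [mem_Orbs, mem_insert]
    constructor
    · rintro ⟨y₀, rfl⟩
      rcases hcover y₀ with rfl | ⟨a, rfl⟩
      · exact Or.inl (orb_of_fixed hz')
      · refine Or.inr (mem_image.2 ⟨orb τ a, orb_mem_Orbs τ a, (horb a).symm⟩)
    · rintro (rfl | hO)
      · exact ⟨z, orb_of_fixed hz'⟩
      · obtain ⟨O', hO', rfl⟩ := mem_image.1 hO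
        obtain ⟨a, rfl⟩ := mem_Orbs.1 hO'
        exact ⟨ι a, horb a⟩
  rw [hOrbs, card_insert_of_notMem, card_image_of_injective _ (Finset.image_injective hι)]
  intro h
  obtain ⟨O', hO', hOz⟩ := mem_image.1 h
  obtain ⟨a, rfl⟩ := mem_Orbs.1 hO'
  have : ι a ∈ ({z} : Finset β) := by
    rw [← hOz]
    exact mem_image_of_mem ι (self_mem_orb τ a)
  rw [mem_singleton] at this
  exact hz a this

end StmtAux

/-- Let `p` be the `(2n+1)`-cycle `(0, -1, …, -n, n, n-1, …, 1)` and
`s̃` the `(2n+1)`-cycle `(0, a₁, …, aₙ, -aₙ, …, -a₁)` on `[n]±`, for a signed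
permutation `a`.  On `[n]± ∪ {-(n+1)}`, let `θ₂` be the fixed-point-free involution
`(0,-1)(1,-2)⋯(n,-n-1)`, i.e. `θ₂(x) = -x-1`, and let `θ₁` be the fixed-point-free
involution `(b₀,b₁)(b₂,b₃)⋯(b_{2n},b_{2n+1})`.  Then `C(p ∘ s̃) = C(θ₁ ∘ θ₂) - 1`. -/
theorem stmt_6 (n : ℕ) (hn : 1 ≤ n) (a : ℕ → ℤ) (hsigned : IsSignedPerm n a)
    (p : Equiv.Perm (Ipm n))
    (hp : ∀ j : Ipm n, (p j : ℤ) = if (j : ℤ) = -(n : ℤ) then (n : ℤ) else (j : ℤ) - 1)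
    (st : Equiv.Perm (Ipm n))
    (hst : ∀ k ≤ 2 * n, ∀ x : Ipm n, (x : ℤ) = seq n a k →
      ((st x : ℤ) = seq n a ((k + 1) % (2 * n + 1))))
    (θ₁ θ₂ : Equiv.Perm (Jpm n))
    (hθ₂ : ∀ x : Jpm n, (θ₂ x : ℤ) = -(x : ℤ) - 1)
    (hθ₁ : ∀ k ≤ n, ∀ x y : Jpm n,
      (x : ℤ) = bseq n a (2 * k) → (y : ℤ) = bseq n a (2 * k + 1) →
      θ₁ x = y ∧ θ₁ y = x) :
    cycleCount (p * st) + 1 = cycleCount (θ₁ * θ₂) := by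
  classical
  -- ### facts about the signed permutation
  have habs : ∀ k : ℕ, 1 ≤ k → k ≤ n → 1 ≤ |a k| ∧ |a k| ≤ n := by
    intro k h1 h2
    have : |a k| ∈ Finset.Icc (1:ℤ) (n:ℤ) := by
      rw [← hsigned]
      exact Finset.mem_image_of_mem _ (Finset.mem_Icc.2 ⟨h1, h2⟩)
    exact Finset.mem_Icc.1 this
  have habs' : ∀ k : ℕ, 1 ≤ k → k ≤ n → -(n:ℤ) ≤ a k ∧ a k ≤ n ∧ a k ≠ 0 := by
    intro k h1 h2
    obtain ⟨u1, u2⟩ := habs k h1 h2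
    obtain ⟨v1, v2⟩ := abs_le.1 u2
    refine ⟨v1, v2, fun h => by rw [h] at u1; simp at u1⟩
  have hinj : ∀ j k : ℕ, 1 ≤ j → j ≤ n → 1 ≤ k → k ≤ n → |a j| = |a k| → j = k := by
    have hcard : ((Finset.Icc 1 n).image (fun k => |a k|)).card = (Finset.Icc 1 n).card := by
      rw [hsigned, Nat.card_Icc, Int.card_Icc]
      omega
    have H := Finset.injOn_of_card_image_eq hcard
    intro j k h1 h2 h3 h4 h5
    exact H (Finset.mem_coe.2 (Finset.mem_Icc.2 ⟨h1, h2⟩))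
      (Finset.mem_coe.2 (Finset.mem_Icc.2 ⟨h3, h4⟩)) h5
  have hane : ∀ j k : ℕ, 1 ≤ j → j ≤ n → 1 ≤ k → k ≤ n → a j = -a k → False := by
    intro j k h1 h2 h3 h4 h5
    have h6 : |a j| = |a k| := by rw [h5, abs_neg]
    have h7 := hinj j k h1 h2 h3 h4 h6
    subst h7
    have h9 := (habs j h1 h2).1
    have h8 : a j = 0 := by omega
    rw [h8] at h9
    simp at h9
  have hsurj : ∀ v : ℤ, 1 ≤ v → v ≤ n → ∃ k : ℕ, 1 ≤ k ∧ k ≤ n ∧ |a k| = v := by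
    intro v h1 h2
    have : v ∈ (Finset.Icc 1 n).image (fun k => |a k|) := by
      rw [hsigned]; exact Finset.mem_Icc.2 ⟨h1, h2⟩
    obtain ⟨k, hk, hk2⟩ := Finset.mem_image.1 this
    rw [Finset.mem_Icc] at hk
    exact ⟨k, hk.1, hk.2, hk2⟩
  -- ### coverage of Jpm
  have hcover : ∀ x : Jpm n, (x:ℤ) = -(n:ℤ)-1 ∨ (x:ℤ) = 0 ∨
      ∃ k : ℕ, 1 ≤ k ∧ k ≤ n ∧ ((x:ℤ) = a k ∨ (x:ℤ) = -a k) := by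
    intro x
    obtain ⟨h1, h2⟩ := Finset.mem_Icc.1 x.2
    by_cases hz0 : (x:ℤ) = -(n:ℤ)-1
    · exact Or.inl hz0
    by_cases h00 : (x:ℤ) = 0
    · exact Or.inr (Or.inl h00)
    · have hb1 : 1 ≤ |(x:ℤ)| := Int.one_le_abs (by omega)
      have hb2 : |(x:ℤ)| ≤ n := abs_le.2 ⟨by omega, h2⟩
      obtain ⟨k, hk1, hk2, hk3⟩ := hsurj |(x:ℤ)| hb1 hb2
      rcases abs_eq_abs.1 hk3 with h | h
      · exact Or.inr (Or.inr ⟨k, hk1, hk2, Or.inl h.symm⟩)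
      · exact Or.inr (Or.inr ⟨k, hk1, hk2, Or.inr (by omega)⟩)
  -- ### θ₂ facts
  have hp2 : ∀ x : Jpm n, θ₂ (θ₂ x) = x := by
    intro x
    apply Subtype.ext
    rw [hθ₂, hθ₂]
    ring
  have i2 : θ₂ * θ₂ = 1 := by
    apply Equiv.ext
    intro x
    simpa [Equiv.Perm.mul_apply] using hp2 x
  have fpf2 : ∀ x : Jpm n, θ₂ x ≠ x := by
    intro x h
    have h2 := hθ₂ x
    rw [h] at h2
    omega
  -- ### bseq computations
  have hbseq0 : bseq n a 0 = 0 := by simp [bseq]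
  have hbseq_even : ∀ k : ℕ, 1 ≤ k → k ≤ n → bseq n a (2*k) = a k := by
    intro k h1 h2
    unfold bseq
    rw [if_neg (by omega), if_neg (by omega), if_neg (by omega)]
    congr 1
    omega
  have hbseq_odd : ∀ k : ℕ, k < n → bseq n a (2*k+1) = -a (k+1) := by
    intro k h
    unfold bseq
    rw [if_neg (by omega), if_neg (by omega), if_pos (by omega)]
    congr 2
    omega
  have hbseq_top : bseq n a (2*n+1) = -((n:ℤ)+1) := by
    unfold bseq
    rw [if_neg (by omega), if_pos rfl]
  -- ### σ := θ₂ * θ₁ value computations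
  have hσapp : ∀ x : Jpm n, (θ₂ * θ₁) x = θ₂ (θ₁ x) := fun x => rfl
  have sig0 : ∀ x : Jpm n, (x:ℤ) = 0 → (((θ₂ * θ₁) x : ℤ)) = a 1 - 1 := by
    intro x hx
    obtain ⟨e1, e2, e3⟩ := habs' 1 le_rfl hn
    obtain ⟨h1, -⟩ := hθ₁ 0 (by omega) x ⟨-a 1, Finset.mem_Icc.2 ⟨by omega, by omega⟩⟩
      (by rw [hx, show 2*0 = 0 from rfl, hbseq0])
      (by rw [show ((⟨-a 1, _⟩ : Jpm n) : ℤ) = -a 1 from rfl, hbseq_odd 0 (by omega)])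
    rw [hσapp, h1, hθ₂]
    show -(-a 1) - 1 = a 1 - 1
    ring
  have sigA : ∀ k : ℕ, 1 ≤ k → k < n → ∀ x : Jpm n, (x:ℤ) = a k →
      (((θ₂ * θ₁) x : ℤ)) = a (k+1) - 1 := by
    intro k hk1 hk2 x hx
    obtain ⟨e1, e2, e3⟩ := habs' (k+1) (by omega) (by omega)
    obtain ⟨h1, -⟩ := hθ₁ k (by omega) x ⟨-a (k+1), Finset.mem_Icc.2 ⟨by omega, by omega⟩⟩
      (by rw [hx, hbseq_even k hk1 (by omega)])
      (by rw [show ((⟨-a (k+1), _⟩ : Jpm n) : ℤ) = -a (k+1) from rfl, hbseq_odd k hk2])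
    rw [hσapp, h1, hθ₂]
    show -(-a (k+1)) - 1 = a (k+1) - 1
    ring
  have sigAn : ∀ x : Jpm n, (x:ℤ) = a n → (((θ₂ * θ₁) x : ℤ)) = n := by
    intro x hx
    obtain ⟨h1, -⟩ := hθ₁ n le_rfl x ⟨-(n:ℤ)-1, Finset.mem_Icc.2 ⟨le_rfl, by omega⟩⟩
      (by rw [hx, hbseq_even n hn le_rfl])
      (by rw [show ((⟨-(n:ℤ)-1, _⟩ : Jpm n) : ℤ) = -(n:ℤ)-1 from rfl, hbseq_top]; ring)
    rw [hσapp, h1, hθ₂]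
    show -(-(n:ℤ)-1) - 1 = n
    ring
  have sigB1 : ∀ x : Jpm n, (x:ℤ) = -a 1 → (((θ₂ * θ₁) x : ℤ)) = -1 := by
    intro x hx
    obtain ⟨-, h2⟩ := hθ₁ 0 (by omega) ⟨0, Finset.mem_Icc.2 ⟨by omega, by omega⟩⟩ x
      (by rw [show ((⟨(0:ℤ), _⟩ : Jpm n) : ℤ) = 0 from rfl, show 2*0 = 0 from rfl, hbseq0])
      (by rw [hx, hbseq_odd 0 (by omega)])
    rw [hσapp, h2, hθ₂]
    show -(0:ℤ) - 1 = -1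
    ring
  have sigB : ∀ k : ℕ, 2 ≤ k → k ≤ n → ∀ x : Jpm n, (x:ℤ) = -a k →
      (((θ₂ * θ₁) x : ℤ)) = -a (k-1) - 1 := by
    intro k hk1 hk2 x hx
    obtain ⟨e1, e2, e3⟩ := habs' (k-1) (by omega) (by omega)
    obtain ⟨-, h2⟩ := hθ₁ (k-1) (by omega) ⟨a (k-1), Finset.mem_Icc.2 ⟨by omega, by omega⟩⟩ x
      (by rw [show ((⟨a (k-1), _⟩ : Jpm n) : ℤ) = a (k-1) from rfl,
              hbseq_even (k-1) (by omega) (by omega)])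
      (by rw [hx, hbseq_odd (k-1) (by omega), show k-1+1 = k by omega])
    rw [hσapp, h2, hθ₂]
  have sigZ : ∀ x : Jpm n, (x:ℤ) = -(n:ℤ)-1 → (((θ₂ * θ₁) x : ℤ)) = -a n - 1 := by
    intro x hx
    obtain ⟨e1, e2, e3⟩ := habs' n hn le_rfl
    obtain ⟨-, h2⟩ := hθ₁ n le_rfl ⟨a n, Finset.mem_Icc.2 ⟨by omega, by omega⟩⟩ x
      (by rw [show ((⟨a n, _⟩ : Jpm n) : ℤ) = a n from rfl, hbseq_even n hn le_rfl])
      (by rw [hx, hbseq_top]; ring)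
    rw [hσapp, h2, hθ₂]
  -- ### θ₁ involution and fixed-point-freeness
  have hpart : ∀ x : Jpm n, ∃ y : Jpm n, θ₁ x = y ∧ θ₁ y = x ∧ (y:ℤ) ≠ (x:ℤ) := by
    intro x
    rcases hcover x with hx | hx | ⟨k, hk1, hk2, hx | hx⟩
    · obtain ⟨e1, e2, e3⟩ := habs' n hn le_rfl
      obtain ⟨h1, h2⟩ := hθ₁ n le_rfl ⟨a n, Finset.mem_Icc.2 ⟨by omega, by omega⟩⟩ x
        (by rw [show ((⟨a n, _⟩ : Jpm n) : ℤ) = a n from rfl, hbseq_even n hn le_rfl])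
        (by rw [hx, hbseq_top]; ring)
      exact ⟨_, h2, h1, fun h => by have h' : a n = (x:ℤ) := h; omega⟩
    · obtain ⟨e1, e2, e3⟩ := habs' 1 le_rfl hn
      obtain ⟨h1, h2⟩ := hθ₁ 0 (by omega) x ⟨-a 1, Finset.mem_Icc.2 ⟨by omega, by omega⟩⟩
        (by rw [hx, show 2*0 = 0 from rfl, hbseq0])
        (by rw [show ((⟨-a 1, _⟩ : Jpm n) : ℤ) = -a 1 from rfl, hbseq_odd 0 (by omega)])
      exact ⟨_, h1, h2, fun h => by have h' : -a 1 = (x:ℤ) := h; omega⟩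
    · -- x = a k
      by_cases hkn : k = n
      · rw [hkn] at hx
        obtain ⟨e1, e2, e3⟩ := habs' n hn le_rfl
        obtain ⟨h1, h2⟩ := hθ₁ n le_rfl x ⟨-(n:ℤ)-1, Finset.mem_Icc.2 ⟨le_rfl, by omega⟩⟩
          (by rw [hx, hbseq_even n hn le_rfl])
          (by rw [show ((⟨-(n:ℤ)-1, _⟩ : Jpm n) : ℤ) = -(n:ℤ)-1 from rfl, hbseq_top]; ring)
        exact ⟨_, h1, h2, fun h => by have h' : -(n:ℤ)-1 = (x:ℤ) := h; omega⟩
      · obtain ⟨e1, e2, e3⟩ := habs' (k+1) (by omega) (by omega)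
        obtain ⟨h1, h2⟩ := hθ₁ k (by omega) x ⟨-a (k+1), Finset.mem_Icc.2 ⟨by omega, by omega⟩⟩
          (by rw [hx, hbseq_even k hk1 (by omega)])
          (by rw [show ((⟨-a (k+1), _⟩ : Jpm n) : ℤ) = -a (k+1) from rfl,
                  hbseq_odd k (by omega)])
        refine ⟨_, h1, h2, fun h => ?_⟩
        have h' : -a (k+1) = (x:ℤ) := h
        exact hane k (k+1) hk1 hk2 (by omega) (by omega) (by omega)
    · -- x = -a k
      by_cases hk1' : k = 1
      · rw [hk1'] at hx
        obtain ⟨e1, e2, e3⟩ := habs' 1 le_rfl hn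
        obtain ⟨h1, h2⟩ := hθ₁ 0 (by omega) ⟨0, Finset.mem_Icc.2 ⟨by omega, by omega⟩⟩ x
          (by rw [show ((⟨(0:ℤ), _⟩ : Jpm n) : ℤ) = 0 from rfl, show 2*0 = 0 from rfl, hbseq0])
          (by rw [hx, hbseq_odd 0 (by omega)])
        exact ⟨_, h2, h1, fun h => by have h' : (0:ℤ) = (x:ℤ) := h; omega⟩
      · obtain ⟨e1, e2, e3⟩ := habs' (k-1) (by omega) (by omega)
        obtain ⟨h1, h2⟩ := hθ₁ (k-1) (by omega) ⟨a (k-1), Finset.mem_Icc.2 ⟨by omega, by omega⟩⟩ x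
          (by rw [show ((⟨a (k-1), _⟩ : Jpm n) : ℤ) = a (k-1) from rfl,
                  hbseq_even (k-1) (by omega) (by omega)])
          (by rw [hx, hbseq_odd (k-1) (by omega), show k-1+1 = k by omega])
        refine ⟨_, h2, h1, fun h => ?_⟩
        have h' : a (k-1) = (x:ℤ) := h
        exact hane (k-1) k (by omega) (by omega) hk1 hk2 (by omega)
  have i1 : θ₁ * θ₁ = 1 := by
    apply Equiv.ext
    intro x
    obtain ⟨y, h1, h2, -⟩ := hpart x
    simp [Equiv.Perm.mul_apply, h1, h2]
  have fpf1 : ∀ x : Jpm n, θ₁ x ≠ x := by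
    intro x h
    obtain ⟨y, h1, -, h3⟩ := hpart x
    apply h3
    rw [← h1, h]
  -- ### seq computations
  have hseq0 : seq n a 0 = 0 := by simp [seq]
  have hseqA : ∀ k : ℕ, 1 ≤ k → k ≤ n → seq n a k = a k := by
    intro k h1 h2
    unfold seq
    rw [if_neg (by omega), if_pos h2]
  have hseqB : ∀ k : ℕ, 1 ≤ k → k ≤ n → seq n a (2*n+1-k) = -a k := by
    intro k h1 h2
    unfold seq
    rw [if_neg (by omega), if_neg (by omega)]
    congr 2
    omega
  -- ### the extension of p * st to Jpm n
  let e : Ipm n ≃ {x : Jpm n // (x:ℤ) ≠ -(n:ℤ)-1} :=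
    { toFun := fun i => ⟨⟨(i:ℤ), Finset.mem_Icc.2
        ⟨by have := (Finset.mem_Icc.1 i.2).1; omega, (Finset.mem_Icc.1 i.2).2⟩⟩,
        by have := (Finset.mem_Icc.1 i.2).1; show ¬ ((i:ℤ) = -(n:ℤ)-1); omega⟩
      invFun := fun x => ⟨(x.1:ℤ), Finset.mem_Icc.2
        ⟨by have h1 := (Finset.mem_Icc.1 x.1.2).1; have h2 := x.2; omega,
         (Finset.mem_Icc.1 x.1.2).2⟩⟩
      left_inv := fun i => Subtype.ext rfl
      right_inv := fun x => Subtype.ext (Subtype.ext rfl) }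
  let τ' : Equiv.Perm (Jpm n) := (p * st).extendDomain e
  let ι : Ipm n → Jpm n := fun i => ((e i) : {x : Jpm n // (x:ℤ) ≠ -(n:ℤ)-1})
  have hτ'ι : ∀ i : Ipm n, τ' (ι i) = ι ((p * st) i) := fun i =>
    Equiv.Perm.extendDomain_apply_image (p * st) e i
  have hιval : ∀ i : Ipm n, ((ι i : Jpm n) : ℤ) = (i : ℤ) := fun i => rfl
  have hτ'val : ∀ x : Jpm n, (x:ℤ) ≠ -(n:ℤ)-1 →
      ∃ i : Ipm n, ((i:ℤ) = (x:ℤ)) ∧ (τ' x : ℤ) = ((p * st) i : ℤ) := by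
    intro x h
    have hb := Finset.mem_Icc.1 x.2
    set i : Ipm n := ⟨(x:ℤ), Finset.mem_Icc.2 ⟨by omega, hb.2⟩⟩ with hidef
    have hxi : ι i = x := Subtype.ext rfl
    have h2 := hτ'ι i
    rw [hxi] at h2
    exact ⟨i, rfl, by rw [h2]; rfl⟩
  -- ### τ' value computations
  have tauval : ∀ k, k ≤ 2*n → ∀ i : Ipm n, (i:ℤ) = seq n a k →
      ((p * st) i : ℤ) = (if seq n a ((k+1) % (2*n+1)) = -(n:ℤ) then (n:ℤ)
        else seq n a ((k+1) % (2*n+1)) - 1) := by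
    intro k hk i h
    have h1 := hst k hk i h
    have h2 := hp (st i)
    rw [h1] at h2
    rw [Equiv.Perm.mul_apply, h2]
  have tau'0 : ∀ x : Jpm n, (x:ℤ) = 0 →
      (τ' x : ℤ) = (if a 1 = -(n:ℤ) then (n:ℤ) else a 1 - 1) := by
    intro x hx
    obtain ⟨i, hi, hv⟩ := hτ'val x (by omega)
    rw [hv, tauval 0 (by omega) i (by rw [hi, hx, hseq0]),
        show (0+1) % (2*n+1) = 1 from Nat.mod_eq_of_lt (by omega), hseqA 1 le_rfl hn]
  have tau'A : ∀ k : ℕ, 1 ≤ k → k < n → ∀ x : Jpm n, (x:ℤ) = a k →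
      (τ' x : ℤ) = (if a (k+1) = -(n:ℤ) then (n:ℤ) else a (k+1) - 1) := by
    intro k h1 h2 x hx
    obtain ⟨e1, e2, e3⟩ := habs' k h1 (by omega)
    obtain ⟨i, hi, hv⟩ := hτ'val x (by omega)
    rw [hv, tauval k (by omega) i (by rw [hi, hx, hseqA k h1 (by omega)]),
        show (k+1) % (2*n+1) = k+1 from Nat.mod_eq_of_lt (by omega),
        hseqA (k+1) (by omega) (by omega)]
  have tau'An : ∀ x : Jpm n, (x:ℤ) = a n →
      (τ' x : ℤ) = (if -a n = -(n:ℤ) then (n:ℤ) else -a n - 1) := by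
    intro x hx
    obtain ⟨e1, e2, e3⟩ := habs' n hn le_rfl
    obtain ⟨i, hi, hv⟩ := hτ'val x (by omega)
    rw [hv, tauval n (by omega) i (by rw [hi, hx, hseqA n hn le_rfl]),
        show (n+1) % (2*n+1) = n+1 from Nat.mod_eq_of_lt (by omega),
        show n+1 = 2*n+1-n by omega, hseqB n hn le_rfl]
  have tau'B1 : ∀ x : Jpm n, (x:ℤ) = -a 1 → (τ' x : ℤ) = -1 := by
    intro x hx
    obtain ⟨e1, e2, e3⟩ := habs' 1 le_rfl hn
    obtain ⟨i, hi, hv⟩ := hτ'val x (by omega)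
    rw [hv, tauval (2*n) (by omega) i
        (by rw [hi, hx, show 2*n = 2*n+1-1 by omega, hseqB 1 le_rfl hn]),
        show (2*n+1) % (2*n+1) = 0 from Nat.mod_self _, hseq0,
        if_neg (by omega : ¬ (0:ℤ) = -(n:ℤ))]
    norm_num
  have tau'B : ∀ k : ℕ, 2 ≤ k → k ≤ n → ∀ x : Jpm n, (x:ℤ) = -a k →
      (τ' x : ℤ) = (if -a (k-1) = -(n:ℤ) then (n:ℤ) else -a (k-1) - 1) := by
    intro k h1 h2 x hx
    obtain ⟨e1, e2, e3⟩ := habs' k (by omega) h2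
    obtain ⟨i, hi, hv⟩ := hτ'val x (by omega)
    rw [hv, tauval (2*n+1-k) (by omega) i (by rw [hi, hx, hseqB k (by omega) h2]),
        show (2*n+1-k+1) % (2*n+1) = 2*n+1-(k-1) from
          (by rw [Nat.mod_eq_of_lt (by omega)]; omega),
        hseqB (k-1) (by omega) (by omega)]
  have hτ'z : ∀ x : Jpm n, (x:ℤ) = -(n:ℤ)-1 → τ' x = x := by
    intro x hx
    apply Equiv.Perm.extendDomain_apply_not_subtype
    show ¬ ((x:ℤ) ≠ -(n:ℤ)-1)
    omega
  -- ### special elements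
  obtain ⟨ebn1, ebn2, ebn3⟩ := habs' n hn le_rfl
  set z : Jpm n := ⟨-(n:ℤ)-1, Finset.mem_Icc.2 ⟨le_rfl, by omega⟩⟩ with hzdef
  set nnJ : Jpm n := ⟨(n:ℤ), Finset.mem_Icc.2 ⟨by omega, le_rfl⟩⟩ with hnnJdef
  set w : Jpm n := ⟨a n, Finset.mem_Icc.2 ⟨by omega, by omega⟩⟩ with hwdef
  have hzval : (z:ℤ) = -(n:ℤ)-1 := rfl
  have hnnval : (nnJ:ℤ) = (n:ℤ) := rfl
  have hwval : (w:ℤ) = a n := rfl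
  have hσw : (θ₂ * θ₁) w = nnJ := Subtype.ext (by rw [sigAn w hwval, hnnval])
  have hσu : (θ₂ * θ₁) ((θ₂ * θ₁)⁻¹ z) = z := Equiv.apply_symm_apply _ z
  have hzn : z ≠ nnJ := by
    intro h
    have h' : (z:ℤ) = (nnJ:ℤ) := by rw [h]
    rw [hzval, hnnval] at h'
    omega
  have hθ₂z : θ₂ z = nnJ := Subtype.ext (by rw [hθ₂, hzval, hnnval]; ring)
  have hns : ¬ (θ₂ * θ₁).SameCycle z nnJ := by
    have h := StmtAux.not_sameCycle_fpf θ₁ θ₂ (θ₂ * θ₁) rfl fpf1 fpf2 i1 i2 z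
    rw [hθ₂z] at h
    exact h
  -- ### goal reduction
  have hinveq : (θ₁ * θ₂)⁻¹ = θ₂ * θ₁ := by
    rw [mul_inv_rev, inv_eq_of_mul_eq_one_left i1, inv_eq_of_mul_eq_one_left i2]
  have hgoal2 : cycleCount (θ₁ * θ₂) = (StmtAux.Orbs (θ₂ * θ₁)).card := by
    rw [StmtAux.cycleCount_eq_card_Orbs, ← StmtAux.Orbs_inv (θ₁ * θ₂), hinveq]
  have hext : (StmtAux.Orbs τ').card = (StmtAux.Orbs (p * st)).card + 1 := by
    apply StmtAux.ext_card (p * st) τ' ι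
      (fun i j hij => Subtype.ext (by
        have h' : ((ι i : Jpm n):ℤ) = ((ι j : Jpm n):ℤ) := by rw [hij]
        rw [hιval, hιval] at h'
        exact h')) z
      (fun i h => by
        have hv : ((ι i : Jpm n):ℤ) = (z:ℤ) := by rw [h]
        have hb := (Finset.mem_Icc.1 i.2).1
        rw [hιval, hzval] at hv
        omega)
      (fun b => by
        by_cases hb : (b:ℤ) = -(n:ℤ)-1
        · exact Or.inl (Subtype.ext hb)
        · obtain ⟨i, hi, -⟩ := hτ'val b hb
          exact Or.inr ⟨i, Subtype.ext (by rw [hιval, hi])⟩)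
      hτ'ι (hτ'z z hzval)
  rw [StmtAux.cycleCount_eq_card_Orbs, hgoal2, ← hext]
  -- now the goal is (Orbs τ').card = (Orbs (θ₂ * θ₁)).card
  by_cases hA : a n = (n:ℤ)
  · -- case A : τ' = θ₂ * θ₁
    have habsn : |a n| = n := by rw [hA]; exact abs_of_nonneg (by positivity)
    have hAcontra : ∀ m : ℕ, 1 ≤ m → m ≤ n → a m = -(n:ℤ) → False := by
      intro m h1 h2 h3
      have hm : |a m| = |a n| := by
        rw [h3, abs_neg, habsn]
        exact abs_of_nonneg (by positivity)
      have hmn := hinj m n h1 h2 hn le_rfl hm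
      subst hmn
      omega
    have hteq : τ' = θ₂ * θ₁ := by
      apply Equiv.ext
      intro x
      rcases hcover x with hx | hx | ⟨k, hk1, hk2, hx | hx⟩
      · apply Subtype.ext
        rw [hτ'z x hx, sigZ x hx, hx]
        omega
      · apply Subtype.ext
        rw [tau'0 x hx, sig0 x hx, if_neg (fun h => hAcontra 1 le_rfl hn h)]
      · by_cases hkn : k = n
        · apply Subtype.ext
          rw [hkn] at hx
          rw [tau'An x hx, sigAn x hx, if_pos (by omega)]
        · apply Subtype.ext
          rw [tau'A k hk1 (by omega) x hx, sigA k hk1 (by omega) x hx,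
              if_neg (fun h => hAcontra (k+1) (by omega) (by omega) h)]
      · by_cases hk1' : k = 1
        · apply Subtype.ext
          rw [hk1'] at hx
          rw [tau'B1 x hx, sigB1 x hx]
        · apply Subtype.ext
          rw [tau'B k (by omega) hk2 x hx, sigB k (by omega) hk2 x hx, if_neg ?_]
          intro h
          have h' : a (k-1) = (n:ℤ) := by omega
          have hm : |a (k-1)| = |a n| := by
            rw [h', habsn]
            exact abs_of_nonneg (by positivity)
          have := hinj (k-1) n (by omega) (by omega) hn le_rfl hm
          omega
    rw [hteq]
  · -- case B : the merge argument
    have hσzval : (((θ₂ * θ₁) z : ℤ)) = -a n - 1 := sigZ z hzval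
    have hσzz : (θ₂ * θ₁) z ≠ z := by
      intro h
      have h' : (((θ₂ * θ₁) z : ℤ)) = (z:ℤ) := by rw [h]
      rw [hσzval, hzval] at h'
      exact hA (by omega)
    have hu_ne_z : (θ₂ * θ₁)⁻¹ z ≠ z := by
      intro h
      apply hσzz
      calc (θ₂ * θ₁) z = (θ₂ * θ₁) ((θ₂ * θ₁)⁻¹ z) := by rw [h]
        _ = z := hσu
    have hu_val : (((θ₂ * θ₁)⁻¹ z : Jpm n) : ℤ) ≠ -(n:ℤ)-1 := by
      intro h
      exact hu_ne_z (Subtype.ext h)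
    have hσuval : (((θ₂ * θ₁) ((θ₂ * θ₁)⁻¹ z) : Jpm n) : ℤ) = -(n:ℤ)-1 := by rw [hσu, hzval]
    have hτu : τ' ((θ₂ * θ₁)⁻¹ z) = nnJ := by
      apply Subtype.ext
      rw [hnnval]
      rcases hcover ((θ₂ * θ₁)⁻¹ z) with hx | hx | ⟨k, hk1, hk2, hx | hx⟩
      · exact absurd hx hu_val
      · have h1 := sig0 _ hx
        rw [hσuval] at h1
        rw [tau'0 _ hx, if_pos (by omega)]
      · by_cases hkn : k = n
        · rw [hkn] at hx
          have h1 := sigAn _ hx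
          rw [hσuval] at h1
          exfalso
          omega
        · have h1 := sigA k hk1 (by omega) _ hx
          rw [hσuval] at h1
          rw [tau'A k hk1 (by omega) _ hx, if_pos (by omega)]
      · by_cases hk1' : k = 1
        · rw [hk1'] at hx
          have h1 := sigB1 _ hx
          rw [hσuval] at h1
          exfalso
          omega
        · have h1 := sigB k (by omega) hk2 _ hx
          rw [hσuval] at h1
          rw [tau'B k (by omega) hk2 _ hx, if_pos (by omega)]
    have hτw : τ' w = (θ₂ * θ₁) z := by
      apply Subtype.ext
      rw [tau'An w hwval, hσzval, if_neg (fun h => hA (by omega))]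
    have hother : ∀ x : Jpm n, x ≠ (θ₂ * θ₁)⁻¹ z → x ≠ w → x ≠ z →
        τ' x = (θ₂ * θ₁) x := by
      intro x hxu hxw hxz
      have hxu' : (θ₂ * θ₁) x ≠ z := by
        intro h
        exact hxu ((θ₂ * θ₁).injective (h.trans hσu.symm))
      have hxuval : (((θ₂ * θ₁) x : Jpm n) : ℤ) ≠ -(n:ℤ)-1 := by
        intro h
        exact hxu' (Subtype.ext h)
      rcases hcover x with hx | hx | ⟨k, hk1, hk2, hx | hx⟩
      · exact absurd (Subtype.ext hx : x = z) hxz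
      · apply Subtype.ext
        have h1 := sig0 x hx
        rw [tau'0 x hx, h1, if_neg (fun h => hxuval (by rw [h1]; omega))]
      · by_cases hkn : k = n
        · exfalso
          apply hxw
          apply Subtype.ext
          rw [hx, hkn, hwval]
        · apply Subtype.ext
          have h1 := sigA k hk1 (by omega) x hx
          rw [tau'A k hk1 (by omega) x hx, h1, if_neg (fun h => hxuval (by rw [h1]; omega))]
      · by_cases hk1' : k = 1
        · apply Subtype.ext
          rw [hk1'] at hx
          rw [tau'B1 x hx, sigB1 x hx]
        · apply Subtype.ext
          have h1 := sigB k (by omega) hk2 x hx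
          rw [tau'B k (by omega) hk2 x hx, h1, if_neg (fun h => hxuval (by rw [h1]; omega))]
    exact StmtAux.merge_card (θ₂ * θ₁) τ' z nnJ ((θ₂ * θ₁)⁻¹ z) w hzn (hτ'z z hzval)
      hσu hσw hns hτu hτw hother
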